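/- Let f : 2^N → ℝ be a non-negative submodular function on a finite ground set N with |N| = n, let S ⊆ N, and let h, t be integers with 1 ≤ t < h < n. Then the averages over all size-h subsets H of N satisfy (1/binom(n,h)) · Σ_{H ⊆ N, |H| = h} F^{H,t}(S \ H) ≥ (1/binom(n,h)) · Σ_{H ⊆ N, |H| = h} F^{H,t}(S) − (h/(n − h)) · max{ f(S') : S' ⊆ N, |S'| ≤ |S| + h }. -/

import Mathlib

open Finset

/-- A set function on a finite ground set is submodular. -/
def Submodular {α : Type*} [DecidableEq α] (f : Finset α → ℝ) : Prop :=
  ∀ A B : Finset α, f A + f B ≥ f (A ∪ B) + f (A ∩ B)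

/-- The surrogate function `F^{H,t}(S) = (1/binom(|H|,t)) · Σ_{H' ⊆ H, |H'| = t} f (S ∪ H')`. -/
noncomputable def surrogate {α : Type*} [DecidableEq α] (f : Finset α → ℝ)
    (H : Finset α) (t : ℕ) (S : Finset α) : ℝ :=
  (1 / (H.card.choose t : ℝ)) * ∑ H' ∈ H.powersetCard t, f (S ∪ H')

namespace AvgSur

variable {α : Type*} [DecidableEq α]

lemma submod_union (f : Finset α → ℝ) (hf : Submodular f) (C : Finset α) :
    Submodular (fun X => f (X ∪ C)) := by
  intro A B
  have h := hf (A ∪ C) (B ∪ C)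
  have h1 : (A ∪ C) ∪ (B ∪ C) = (A ∪ B) ∪ C := by ext x; simp; tauto
  have h2 : (A ∪ C) ∩ (B ∪ C) = (A ∩ B) ∪ C := by ext x; simp; tauto
  rw [h1, h2] at h
  exact h

lemma sum_erase_ge (R : Finset α) : ∀ f : Finset α → ℝ, Submodular f →
    ((R.card : ℝ) - 1) * f R + f ∅ ≤ ∑ x ∈ R, f (R.erase x) := by
  induction R using Finset.induction_on with
  | empty => intro f hf; simp
  | @insert a R₀ ha ih =>
    intro f hf
    rw [Finset.sum_insert ha, Finset.erase_insert ha]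
    have e2 : ∀ x ∈ R₀, (insert a R₀).erase x = insert a (R₀.erase x) := by
      intro x hx
      exact Finset.erase_insert_of_ne (fun hax => ha (hax ▸ hx))
    rw [Finset.sum_congr rfl (fun x hx => by rw [e2 x hx])]
    have hg : Submodular (fun X => f (insert a X)) := by
      intro A B
      have hu : ∀ X : Finset α, X ∪ {a} = insert a X := fun X => by ext; simp [or_comm]
      have h := submod_union f hf {a} A B
      simp only [hu] at h
      exact h
    have hIH := ih (fun X => f (insert a X)) hg
    simp only [insert_empty_eq] at hIH
    have hsub : f (insert a R₀) + f ∅ ≤ f R₀ + f {a} := by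
      have h := hf R₀ {a}
      have h1 : R₀ ∪ {a} = insert a R₀ := by ext; simp [or_comm]
      have h2 : R₀ ∩ {a} = ∅ := by
        ext x; simp; rintro hx rfl; exact ha hx
      rw [h1, h2] at h
      linarith [h]
    have hcard : ((insert a R₀).card : ℝ) = (R₀.card : ℝ) + 1 := by
      rw [Finset.card_insert_of_notMem ha]; push_cast; ring
    rw [hcard]
    linarith


lemma chain (f : Finset α → ℝ) (hf : Submodular f) (hf0 : ∀ X, 0 ≤ f X) :
    ∀ (N : ℕ) (R : Finset α), R.card = N → ∀ m, m ≤ N →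
      (m : ℝ) * (N.choose m : ℝ) * f R ≤ (N : ℝ) * ∑ X ∈ R.powersetCard m, f X := by
  intro N
  induction N using Nat.strong_induction_on with
  | _ N IH =>
    intro R hR m hm
    rcases eq_or_lt_of_le hm with heq | hlt
    · subst heq
      rw [← hR, Finset.powersetCard_self, Finset.sum_singleton, Nat.choose_self]
      push_cast; ring_nf
      exact le_refl _
    · rcases Nat.eq_zero_or_pos m with hm0 | hm1
      · subst hm0
        simp only [Nat.cast_zero, zero_mul]
        have : 0 ≤ ∑ X ∈ R.powersetCard 0, f X :=
          Finset.sum_nonneg fun X _ => hf0 X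
        positivity
      · -- 1 ≤ m < N
        have hN1 : 1 ≤ N := le_trans hm1 hm
        have hN2 : 2 ≤ N := lt_of_le_of_lt hm1 hlt
        -- key identity
        have hfilter : ∀ x ∈ R, (R.erase x).powersetCard m
            = (R.powersetCard m).filter (fun X => x ∉ X) := by
          intro x hx
          ext X
          simp only [Finset.mem_powersetCard, Finset.mem_filter, Finset.subset_erase]
          tauto
        have key : ∑ x ∈ R, ∑ X ∈ (R.erase x).powersetCard m, f X
            = ((N - m : ℕ) : ℝ) * ∑ X ∈ R.powersetCard m, f X := by
          rw [Finset.sum_congr rfl (fun x hx => by rw [hfilter x hx])]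
          rw [Finset.mul_sum]
          rw [Finset.sum_comm' (s' := fun X => R \ X) (t' := R.powersetCard m)
            (by
              intro x X
              simp only [Finset.mem_filter, Finset.mem_sdiff]
              tauto)]
          refine Finset.sum_congr rfl fun X hX => ?_
          rw [Finset.sum_const]
          rw [Finset.mem_powersetCard] at hX
          rw [Finset.card_sdiff_of_subset hX.1, hR, hX.2, nsmul_eq_mul]
        -- sum the induction hypothesis
        have hIH : ∀ x ∈ R, (m : ℝ) * ((N-1).choose m : ℝ) * f (R.erase x)
            ≤ ((N - 1 : ℕ) : ℝ) * ∑ X ∈ (R.erase x).powersetCard m, f X := by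
          intro x hx
          exact IH (N-1) (by omega) (R.erase x)
            (by rw [Finset.card_erase_of_mem hx, hR]) m (by omega)
        have hsum : (m : ℝ) * ((N-1).choose m : ℝ) * ∑ x ∈ R, f (R.erase x)
            ≤ ((N - 1 : ℕ) : ℝ) * (((N - m : ℕ) : ℝ) * ∑ X ∈ R.powersetCard m, f X) := by
          rw [← key, Finset.mul_sum, Finset.mul_sum]
          exact Finset.sum_le_sum hIH
        have hE := sum_erase_ge R f hf
        have hcast1 : ((N - 1 : ℕ) : ℝ) = (N:ℝ) - 1 := by
          rw [Nat.cast_sub hN1]; norm_num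
        have hcast2 : ((N - m : ℕ) : ℝ) = (N:ℝ) - (m:ℝ) := by
          rw [Nat.cast_sub hm]
        rw [hR] at hE
        rw [hcast1, hcast2] at hsum
        have hfR : 0 ≤ f R := hf0 R
        have hfe : 0 ≤ f (∅ : Finset α) := hf0 ∅
        have hCp : (0:ℝ) ≤ (m : ℝ) * ((N-1).choose m : ℝ) := by positivity
        have hstep : ((N:ℝ) - 1) * ((m : ℝ) * ((N-1).choose m : ℝ) * f R)
            ≤ ((N:ℝ) - 1) * (((N:ℝ) - m) * ∑ X ∈ R.powersetCard m, f X) := by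
          have h1 : (m : ℝ) * ((N-1).choose m : ℝ) * (((N:ℝ) - 1) * f R)
              ≤ (m : ℝ) * ((N-1).choose m : ℝ) * ∑ x ∈ R, f (R.erase x) := by
            apply mul_le_mul_of_nonneg_left _ hCp
            linarith
          calc ((N:ℝ) - 1) * ((m : ℝ) * ((N-1).choose m : ℝ) * f R)
              = (m : ℝ) * ((N-1).choose m : ℝ) * (((N:ℝ) - 1) * f R) := by ring
            _ ≤ (m : ℝ) * ((N-1).choose m : ℝ) * ∑ x ∈ R, f (R.erase x) := h1
            _ ≤ ((N:ℝ) - 1) * (((N:ℝ) - m) * ∑ X ∈ R.powersetCard m, f X) := hsum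
        have hN1pos : (0:ℝ) < (N:ℝ) - 1 := by
          have : (2:ℝ) ≤ (N:ℝ) := by exact_mod_cast hN2
          linarith
        have hq : (m : ℝ) * ((N-1).choose m : ℝ) * f R
            ≤ ((N:ℝ) - m) * ∑ X ∈ R.powersetCard m, f X :=
          le_of_mul_le_mul_left hstep hN1pos
        have hid : N * ((N-1).choose m) = N.choose m * (N - m) := by
          have h1 := Nat.add_one_mul_choose_eq (N-1) m
          have h2 := Nat.choose_succ_right_eq N m
          have h3 : N - 1 + 1 = N := by omega
          rw [h3] at h1
          exact h1.trans h2
        have hidR : (N:ℝ) * ((N-1).choose m : ℝ) = (N.choose m : ℝ) * ((N:ℝ) - m) := by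
          have := congrArg (fun x : ℕ => (x : ℝ)) hid
          push_cast [Nat.cast_sub hm] at this
          linarith [this]
        have hNmpos : (0:ℝ) < (N:ℝ) - m := by
          have : (m:ℝ) < (N:ℝ) := by exact_mod_cast hlt
          linarith
        have hmul := mul_le_mul_of_nonneg_left hq (by positivity : (0:ℝ) ≤ (N:ℝ))
        have h5 : ((N:ℝ) - m) * ((m:ℝ) * (N.choose m : ℝ) * f R)
            ≤ ((N:ℝ) - m) * ((N:ℝ) * ∑ X ∈ R.powersetCard m, f X) := by
          calc ((N:ℝ) - m) * ((m:ℝ) * (N.choose m : ℝ) * f R)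
              = (m:ℝ) * f R * ((N.choose m : ℝ) * ((N:ℝ) - m)) := by ring
            _ = (m:ℝ) * f R * ((N:ℝ) * ((N-1).choose m : ℝ)) := by rw [hidR]
            _ = (N:ℝ) * ((m:ℝ) * ((N-1).choose m : ℝ) * f R) := by ring
            _ ≤ (N:ℝ) * (((N:ℝ) - m) * ∑ X ∈ R.powersetCard m, f X) := hmul
            _ = ((N:ℝ) - m) * ((N:ℝ) * ∑ X ∈ R.powersetCard m, f X) := by ring
        exact le_of_mul_le_mul_left h5 hNmpos


lemma card_filter_superset (U D : Finset α) (hD : D ⊆ U) (h : ℕ) (hDh : D.card ≤ h) :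
    ((U.powersetCard h).filter (fun H => D ⊆ H)).card = (U.card - D.card).choose (h - D.card) := by
  have hrw : (U.card - D.card).choose (h - D.card)
      = ((U \ D).powersetCard (h - D.card)).card := by
    rw [Finset.card_powersetCard, Finset.card_sdiff_of_subset hD]
  rw [hrw]
  apply Finset.card_nbij' (fun H => H \ D) (fun Y => Y ∪ D)
  · intro H hH
    simp only [Finset.mem_coe, Finset.mem_filter, Finset.mem_powersetCard] at hH
    obtain ⟨⟨hHU, hHc⟩, hDH⟩ := hH
    simp only [Finset.mem_coe, Finset.mem_powersetCard]
    exact ⟨Finset.sdiff_subset_sdiff hHU (le_refl D),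
      by rw [Finset.card_sdiff_of_subset hDH, hHc]⟩
  · intro Y hY
    simp only [Finset.mem_coe, Finset.mem_powersetCard] at hY
    obtain ⟨hYU, hYc⟩ := hY
    have hdisj : Disjoint Y D := by
      refine Finset.disjoint_left.mpr fun a haY haD => ?_
      exact (Finset.mem_sdiff.mp (hYU haY)).2 haD
    simp only [Finset.mem_coe, Finset.mem_filter, Finset.mem_powersetCard]
    refine ⟨⟨Finset.union_subset (hYU.trans Finset.sdiff_subset) hD, ?_⟩,
      Finset.subset_union_right⟩
    rw [Finset.card_union_of_disjoint hdisj, hYc]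
    omega
  · intro H hH
    simp only [Finset.mem_coe, Finset.mem_filter, Finset.mem_powersetCard] at hH
    exact Finset.sdiff_union_of_subset hH.2
  · intro Y hY
    simp only [Finset.mem_coe, Finset.mem_powersetCard] at hY
    have hdisj : Disjoint Y D := by
      refine Finset.disjoint_left.mpr fun a haY haD => ?_
      exact (Finset.mem_sdiff.mp (hY.1 haY)).2 haD
    beta_reduce
    rw [Finset.union_sdiff_distrib, Finset.sdiff_self, Finset.union_empty,
      Finset.sdiff_eq_self_of_disjoint hdisj]


lemma fiber_card [Fintype α] (n h t : ℕ) (hn : Fintype.card α = n)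
    (H' R K : Finset α) (hH' : H'.card = t) (hdisj : Disjoint H' R) (hK : K ⊆ R) :
    (((univ : Finset α).powersetCard h).filter (fun H => H' ⊆ H ∧ R ∩ H = K)).card
      = if t + K.card ≤ h then (n - t - R.card).choose (h - t - K.card) else 0 := by
  have hdisjK : Disjoint H' K := hdisj.mono_right hK
  have hKR : K.card ≤ R.card := Finset.card_le_card hK
  have htRn : t + R.card ≤ n := by
    have h1 : (H' ∪ R).card = t + R.card := by
      rw [Finset.card_union_of_disjoint hdisj, hH']
    have h2 := Finset.card_le_card (Finset.subset_univ (H' ∪ R))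
    rw [Finset.card_univ, hn] at h2
    omega
  split_ifs with hc
  · have hset : ((univ : Finset α).powersetCard h).filter (fun H => H' ⊆ H ∧ R ∩ H = K)
        = (((univ : Finset α) \ (R \ K)).powersetCard h).filter (fun H => (H' ∪ K) ⊆ H) := by
      ext H
      simp only [Finset.mem_filter, Finset.mem_powersetCard, Finset.union_subset_iff]
      constructor
      · rintro ⟨⟨-, hcard⟩, hH'H, hRH⟩
        refine ⟨⟨?_, hcard⟩, hH'H, ?_⟩
        · intro x hx
          rw [Finset.mem_sdiff]
          refine ⟨Finset.mem_univ x, fun hxRK => ?_⟩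
          rw [Finset.mem_sdiff] at hxRK
          have : x ∈ R ∩ H := Finset.mem_inter.mpr ⟨hxRK.1, hx⟩
          rw [hRH] at this
          exact hxRK.2 this
        · intro x hx
          have hx' : x ∈ R ∩ H := by rw [hRH]; exact hx
          exact (Finset.mem_inter.mp hx').2
      · rintro ⟨⟨hHU, hcard⟩, hH'H, hKH⟩
        refine ⟨⟨Finset.subset_univ H, hcard⟩, hH'H, ?_⟩
        apply Finset.Subset.antisymm
        · intro x hx
          rw [Finset.mem_inter] at hx
          by_contra hxK
          have hxx := hHU hx.2
          rw [Finset.mem_sdiff] at hxx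
          exact hxx.2 (Finset.mem_sdiff.mpr ⟨hx.1, hxK⟩)
        · intro x hx
          exact Finset.mem_inter.mpr ⟨hK hx, hKH hx⟩
    rw [hset, card_filter_superset]
    · rw [Finset.card_sdiff_of_subset (Finset.subset_univ _), Finset.card_univ, hn,
        Finset.card_sdiff_of_subset hK, Finset.card_union_of_disjoint hdisjK, hH']
      congr 1 <;> omega
    · intro x hx
      rw [Finset.mem_union] at hx
      rw [Finset.mem_sdiff]
      refine ⟨Finset.mem_univ x, fun hxRK => ?_⟩
      rw [Finset.mem_sdiff] at hxRK
      rcases hx with hx | hx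
      · exact (Finset.disjoint_left.mp hdisj hx) hxRK.1
      · exact hxRK.2 hx
    · rw [Finset.card_union_of_disjoint hdisjK, hH']
      exact hc
  · rw [Finset.card_eq_zero, Finset.filter_eq_empty_iff]
    rintro H hHm ⟨hH'H, hRH⟩
    have hKH : K ⊆ H := by
      intro x hx
      have hx' : x ∈ R ∩ H := by rw [hRH]; exact hx
      exact (Finset.mem_inter.mp hx').2
    have hle := Finset.card_le_card (Finset.union_subset hH'H hKH)
    rw [Finset.card_union_of_disjoint hdisjK, hH'] at hle
    rw [Finset.mem_powersetCard] at hHm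
    omega

lemma per_H' [Fintype α] (n h t : ℕ) (hn : Fintype.card α = n)
    (f : Finset α → ℝ) (hf0 : ∀ X : Finset α, 0 ≤ f X) (hf : Submodular f)
    (S H' : Finset α) (hH' : H'.card = t) (hth : t < h) (hhn : h < n) :
    ((n-t).choose (h-t) : ℝ) * f (S ∪ H') - ((n-t-1).choose (h-t-1) : ℝ) * f (S ∪ H')
      ≤ ∑ H ∈ ((univ : Finset α).powersetCard h).filter (fun H => H' ⊆ H),
          f ((S \ H) ∪ H') := by
  classical
  set R : Finset α := S \ H' with hRdef
  set r : ℕ := R.card with hrdef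
  set g : Finset α → ℝ := fun X => f (X ∪ H') with hgdef
  have hg : Submodular g := submod_union f hf H'
  have hg0 : ∀ X, 0 ≤ g X := fun X => hf0 _
  have hdisj : Disjoint H' R := Finset.disjoint_sdiff
  have hgR : f (S ∪ H') = g R := by
    simp only [hgdef, hRdef, Finset.sdiff_union_self_eq_union]
  set A : Finset (Finset α) :=
    ((univ : Finset α).powersetCard h).filter (fun H => H' ⊆ H) with hAdef
  -- rewrite summand
  have hterm : ∀ H ∈ A, f ((S \ H) ∪ H') = g (R \ (R ∩ H)) := by
    intro H hH
    rw [hAdef, Finset.mem_filter] at hH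
    have hH'H : H' ⊆ H := hH.2
    simp only [hgdef]
    congr 1
    ext x
    have hx' : x ∈ H' → x ∈ H := fun hx => hH'H hx
    simp only [Finset.mem_union, Finset.mem_sdiff, Finset.mem_inter, hRdef]
    tauto
  rw [Finset.sum_congr rfl hterm]
  -- weights
  set w : ℕ → ℕ := fun j => if t + j ≤ h then (n - t - r).choose (h - t - j) else 0
    with hwdef
  have hfibcard : ∀ K ∈ R.powerset, (A.filter (fun H => R ∩ H = K)).card = w K.card := by
    intro K hK
    rw [Finset.mem_powerset] at hK
    rw [hAdef, Finset.filter_filter]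
    exact fiber_card n h t hn H' R K hH' hdisj hK
  have hmaps : ∀ H ∈ A, R ∩ H ∈ R.powerset :=
    fun H _ => Finset.mem_powerset.mpr Finset.inter_subset_left
  -- main sum rewrite
  have hT : ∑ H ∈ A, g (R \ (R ∩ H))
      = ∑ j ∈ Finset.range (r + 1), (w j : ℝ) * ∑ K ∈ R.powersetCard j, g (R \ K) := by
    rw [← Finset.sum_fiberwise_of_maps_to hmaps (fun H => g (R \ (R ∩ H)))]
    rw [Finset.sum_powerset]
    refine Finset.sum_congr rfl fun j hj => ?_
    rw [Finset.mul_sum]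
    refine Finset.sum_congr rfl fun K hK => ?_
    rw [Finset.mem_powersetCard] at hK
    have h1 : ∑ H ∈ A.filter (fun H => R ∩ H = K), g (R \ (R ∩ H))
        = ∑ H ∈ A.filter (fun H => R ∩ H = K), g (R \ K) := by
      refine Finset.sum_congr rfl fun H hH => ?_
      rw [Finset.mem_filter] at hH
      rw [hH.2]
    rw [h1, Finset.sum_const, nsmul_eq_mul,
      hfibcard K (Finset.mem_powerset.mpr hK.1), hK.2]
  -- complement sums
  have hcompl : ∀ j ≤ r, ∑ K ∈ R.powersetCard j, g (R \ K)
      = ∑ X ∈ R.powersetCard (r - j), g X := by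
    intro j hj
    refine Finset.sum_nbij' (fun K => R \ K) (fun X => R \ X) ?_ ?_ ?_ ?_ ?_
    · intro K hK
      rw [Finset.mem_powersetCard] at hK ⊢
      exact ⟨Finset.sdiff_subset, by rw [Finset.card_sdiff_of_subset hK.1, hK.2]⟩
    · intro X hX
      rw [Finset.mem_powersetCard] at hX ⊢
      refine ⟨Finset.sdiff_subset, ?_⟩
      rw [Finset.card_sdiff_of_subset hX.1, hX.2]
      omega
    · intro K hK
      rw [Finset.mem_powersetCard] at hK
      exact Finset.sdiff_sdiff_eq_self hK.1
    · intro X hX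
      rw [Finset.mem_powersetCard] at hX
      exact Finset.sdiff_sdiff_eq_self hX.1
    · intro K _; rfl
  -- chain bound
  have hchain : ∀ j ≤ r, ((r - j : ℕ) : ℝ) * (r.choose j : ℝ) * g R
      ≤ (r : ℝ) * ∑ X ∈ R.powersetCard (r - j), g X := by
    intro j hj
    have := chain g hg hg0 r R hrdef.symm (r - j) (Nat.sub_le r j)
    rwa [Nat.choose_symm hj] at this
  -- counting identity (b)
  have hcA : A.card = (n - t).choose (h - t) := by
    have := card_filter_superset (univ : Finset α) H' (Finset.subset_univ H') h
      (by rw [hH']; omega)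
    rw [Finset.card_univ, hn, hH'] at this
    exact this
  have hb : ∑ j ∈ Finset.range (r + 1), w j * r.choose j = (n - t).choose (h - t) := by
    rw [← hcA, Finset.card_eq_sum_card_fiberwise hmaps, Finset.sum_powerset]
    refine (Finset.sum_congr rfl fun j hj => ?_).symm
    have h1 : ∀ K ∈ R.powersetCard j, (A.filter (fun H => R ∩ H = K)).card = w j := by
      intro K hK
      rw [Finset.mem_powersetCard] at hK
      rw [hfibcard K (Finset.mem_powerset.mpr hK.1), hK.2]
    rw [Finset.sum_congr rfl h1, Finset.sum_const, Finset.card_powersetCard, smul_eq_mul,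
      mul_comm]
  -- counting identity (c)
  have hc : ∑ j ∈ Finset.range (r + 1), w j * r.choose j * j
      = r * ((n - t - 1).choose (h - t - 1)) := by
    have e1 : ∑ j ∈ Finset.range (r + 1), w j * r.choose j * j
        = ∑ H ∈ A, (R ∩ H).card := by
      rw [← Finset.sum_fiberwise_of_maps_to hmaps (fun H => (R ∩ H).card),
        Finset.sum_powerset]
      refine (Finset.sum_congr rfl fun j hj => ?_).symm
      have h1 : ∀ K ∈ R.powersetCard j, ∑ H ∈ A.filter (fun H => R ∩ H = K), (R ∩ H).card
          = w j * j := by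
        intro K hK
        rw [Finset.mem_powersetCard] at hK
        have h2 : ∀ H ∈ A.filter (fun H => R ∩ H = K), (R ∩ H).card = K.card := by
          intro H hH
          rw [Finset.mem_filter] at hH
          rw [hH.2]
        rw [Finset.sum_congr rfl h2, Finset.sum_const, smul_eq_mul,
          hfibcard K (Finset.mem_powerset.mpr hK.1), hK.2]
      rw [Finset.sum_congr rfl h1, Finset.sum_const, Finset.card_powersetCard, smul_eq_mul]
      ring
    rw [e1]
    have e2 : ∀ H ∈ A, (R ∩ H).card = ∑ e ∈ R, if e ∈ H then 1 else 0 := by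
      intro H _
      rw [← Finset.card_filter, Finset.filter_mem_eq_inter]
    rw [Finset.sum_congr rfl e2, Finset.sum_comm]
    have e3 : ∀ e ∈ R, (∑ H ∈ A, if e ∈ H then 1 else 0)
        = (n - t - 1).choose (h - t - 1) := by
      intro e he
      rw [← Finset.card_filter]
      have heH' : e ∉ H' := Finset.disjoint_right.mp hdisj he
      have e4 : A.filter (fun H => e ∈ H)
          = ((univ : Finset α).powersetCard h).filter (fun H => insert e H' ⊆ H) := by
        rw [hAdef, Finset.filter_filter]
        refine Finset.filter_congr fun H _ => ?_
        rw [Finset.insert_subset_iff]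
        tauto
      rw [e4, card_filter_superset (univ : Finset α) (insert e H') (Finset.subset_univ _) h
        (by rw [Finset.card_insert_of_notMem heH', hH']; omega)]
      rw [Finset.card_univ, hn, Finset.card_insert_of_notMem heH', hH']
      congr 1 <;> omega
    rw [Finset.sum_congr rfl e3, Finset.sum_const, smul_eq_mul]
  -- put it together
  set c1 : ℕ := (n - t).choose (h - t) with hc1def
  set c2 : ℕ := (n - t - 1).choose (h - t - 1) with hc2def
  rw [hgR]
  rcases Nat.eq_zero_or_pos r with hr0 | hrpos
  · -- r = 0 : R = ∅
    have hRempty : R = ∅ := Finset.card_eq_zero.mp hr0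
    have hconst : ∑ H ∈ A, g (R \ (R ∩ H)) = (A.card : ℝ) * g R := by
      calc ∑ H ∈ A, g (R \ (R ∩ H)) = ∑ H ∈ A, g R :=
            Finset.sum_congr rfl (fun H _ => by rw [hRempty]; simp)
        _ = (A.card : ℝ) * g R := by rw [Finset.sum_const, nsmul_eq_mul]
    rw [hconst, hcA]
    have h0 : (0:ℝ) ≤ (c2 : ℝ) * g R := mul_nonneg (Nat.cast_nonneg _) (hg0 R)
    linarith
  · -- r > 0
    have hsumineq : (r : ℝ) * ∑ H ∈ A, g (R \ (R ∩ H))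
        ≥ ∑ j ∈ Finset.range (r + 1), (w j : ℝ) * (((r - j : ℕ) : ℝ) * (r.choose j : ℝ) * g R) := by
      rw [hT, Finset.mul_sum]
      refine Finset.sum_le_sum fun j hj => ?_
      rw [Finset.mem_range] at hj
      have hjr : j ≤ r := by omega
      have hch := hchain j hjr
      rw [← hcompl j hjr] at hch
      calc (w j : ℝ) * (((r - j : ℕ) : ℝ) * (r.choose j : ℝ) * g R)
          ≤ (w j : ℝ) * ((r : ℝ) * ∑ K ∈ R.powersetCard j, g (R \ K)) :=
            mul_le_mul_of_nonneg_left hch (by positivity)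
        _ = (r : ℝ) * ((w j : ℝ) * ∑ K ∈ R.powersetCard j, g (R \ K)) := by ring
    -- evaluate the coefficient sum
    have hcoeff : ∑ j ∈ Finset.range (r + 1), (w j : ℝ) * (((r - j : ℕ) : ℝ) * (r.choose j : ℝ))
        = (r : ℝ) * (c1 : ℝ) - (r : ℝ) * (c2 : ℝ) := by
      have hnat : (∑ j ∈ Finset.range (r + 1), w j * r.choose j * (r - j))
          + r * c2 = r * c1 := by
        rw [← hc, ← Finset.sum_add_distrib]
        have : ∀ j ∈ Finset.range (r + 1),
            w j * r.choose j * (r - j) + w j * r.choose j * j = w j * r.choose j * r := by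
          intro j hj
          rw [Finset.mem_range] at hj
          rw [← Nat.mul_add]
          congr 1
          omega
        rw [Finset.sum_congr rfl this, ← Finset.sum_mul, hb, Nat.mul_comm]
      have hcast := congrArg (fun x : ℕ => (x : ℝ)) hnat
      push_cast at hcast
      have hre : ∑ j ∈ Finset.range (r + 1), (w j : ℝ) * (((r - j : ℕ) : ℝ) * (r.choose j : ℝ))
          = ∑ j ∈ Finset.range (r + 1), (w j : ℝ) * (r.choose j : ℝ) * ((r - j : ℕ) : ℝ) :=
        Finset.sum_congr rfl fun j _ => by ring
      rw [hre]
      linarith [hcast]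
    have hfinal : (r : ℝ) * ∑ H ∈ A, g (R \ (R ∩ H))
        ≥ (r : ℝ) * (((c1 : ℝ) - (c2 : ℝ)) * g R) := by
      have h1 : ∑ j ∈ Finset.range (r + 1), (w j : ℝ) * (((r - j : ℕ) : ℝ) * (r.choose j : ℝ) * g R)
          = ((r : ℝ) * (c1 : ℝ) - (r : ℝ) * (c2 : ℝ)) * g R := by
        rw [← hcoeff, Finset.sum_mul]
        refine Finset.sum_congr rfl fun j hj => by ring
      calc (r : ℝ) * ∑ H ∈ A, g (R \ (R ∩ H))
          ≥ ((r : ℝ) * (c1 : ℝ) - (r : ℝ) * (c2 : ℝ)) * g R := by rw [← h1]; exact hsumineq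
        _ = (r : ℝ) * (((c1 : ℝ) - (c2 : ℝ)) * g R) := by ring
    have hrposR : (0:ℝ) < (r : ℝ) := by exact_mod_cast hrpos
    have := le_of_mul_le_mul_left hfinal hrposR
    linarith

lemma swap_sums [Fintype α] (h t : ℕ) (F : Finset α → Finset α → ℝ) :
    ∑ H ∈ (univ : Finset α).powersetCard h, ∑ H' ∈ H.powersetCard t, F H H'
      = ∑ H' ∈ (univ : Finset α).powersetCard t,
          ∑ H ∈ ((univ : Finset α).powersetCard h).filter (fun H => H' ⊆ H), F H H' := by
  refine Finset.sum_comm' ?_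
  intro H H'
  simp only [Finset.mem_powersetCard, Finset.mem_filter, Finset.subset_univ, true_and]
  tauto

lemma sum_surrogate_eq [Fintype α] (n h t : ℕ) (hn : Fintype.card α = n)
    (f : Finset α → ℝ) (G : Finset α → Finset α) :
    ∑ H ∈ (univ : Finset α).powersetCard h, surrogate f H t (G H)
      = (1 / (h.choose t : ℝ)) *
        ∑ H' ∈ (univ : Finset α).powersetCard t,
          ∑ H ∈ ((univ : Finset α).powersetCard h).filter (fun H => H' ⊆ H),
            f (G H ∪ H') := by
  rw [← swap_sums h t (fun H H' => f (G H ∪ H')), Finset.mul_sum]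
  refine Finset.sum_congr rfl fun H hH => ?_
  rw [Finset.mem_powersetCard] at hH
  simp only [surrogate, hH.2]

end AvgSur

theorem average_surrogate_remove_H {α : Type*} [DecidableEq α] [Fintype α]
    (n : ℕ) (hn : Fintype.card α = n)
    (f : Finset α → ℝ) (hf0 : ∀ S : Finset α, 0 ≤ f S) (hf : Submodular f)
    (S : Finset α) (h t : ℕ) (ht1 : 1 ≤ t) (hth : t < h) (hhn : h < n) :
    (1 / (n.choose h : ℝ)) * ∑ H ∈ (Finset.univ : Finset α).powersetCard h,
        surrogate f H t (S \ H) ≥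
      (1 / (n.choose h : ℝ)) * ∑ H ∈ (Finset.univ : Finset α).powersetCard h,
          surrogate f H t S -
        ((h : ℝ) / ((n : ℝ) - (h : ℝ))) *
          sSup {y : ℝ | ∃ S' : Finset α, S'.card ≤ S.card + h ∧ y = f S'} := by
  classical
  set M := sSup {y : ℝ | ∃ S' : Finset α, S'.card ≤ S.card + h ∧ y = f S'} with hMdef
  have hbdd : BddAbove {y : ℝ | ∃ S' : Finset α, S'.card ≤ S.card + h ∧ y = f S'} := by
    apply Set.Finite.bddAbove
    apply Set.Finite.subset (Set.finite_range f)
    rintro y ⟨S', -, rfl⟩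
    exact ⟨S', rfl⟩
  have hM : ∀ S' : Finset α, S'.card ≤ S.card + h → f S' ≤ M :=
    fun S' h' => le_csSup hbdd ⟨S', h', rfl⟩
  have hM0 : 0 ≤ M := le_trans (hf0 ∅) (hM ∅ (by simp))
  set c1 : ℕ := (n - t).choose (h - t) with hc1def
  set c2 : ℕ := (n - t - 1).choose (h - t - 1) with hc2def
  rw [AvgSur.sum_surrogate_eq n h t hn f (fun H => S \ H),
    AvgSur.sum_surrogate_eq n h t hn f (fun _ => S)]
  set L := ∑ H' ∈ (univ : Finset α).powersetCard t,
      ∑ H ∈ ((univ : Finset α).powersetCard h).filter (fun H => H' ⊆ H),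
        f (S \ H ∪ H') with hLdef
  -- the S side inner sums are constant
  have hconstS : ∑ H' ∈ (univ : Finset α).powersetCard t,
      ∑ H ∈ ((univ : Finset α).powersetCard h).filter (fun H => H' ⊆ H), f (S ∪ H')
      = ∑ H' ∈ (univ : Finset α).powersetCard t, (c1 : ℝ) * f (S ∪ H') := by
    refine Finset.sum_congr rfl fun H' hH' => ?_
    rw [Finset.mem_powersetCard] at hH'
    rw [Finset.sum_const, nsmul_eq_mul,
      AvgSur.card_filter_superset univ H' (Finset.subset_univ _) h (by rw [hH'.2]; omega),
      Finset.card_univ, hn, hH'.2]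
  rw [hconstS]
  set Q := ∑ H' ∈ (univ : Finset α).powersetCard t, (c1 : ℝ) * f (S ∪ H') with hQdef
  have key : Q - L ≤ (n.choose t : ℝ) * ((c2 : ℝ) * M) := by
    rw [hQdef, hLdef, ← Finset.sum_sub_distrib]
    calc ∑ H' ∈ (univ : Finset α).powersetCard t,
          ((c1 : ℝ) * f (S ∪ H') -
            ∑ H ∈ ((univ : Finset α).powersetCard h).filter (fun H => H' ⊆ H),
              f (S \ H ∪ H'))
        ≤ ∑ H' ∈ (univ : Finset α).powersetCard t, (c2 : ℝ) * M := by
          refine Finset.sum_le_sum fun H' hH' => ?_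
          rw [Finset.mem_powersetCard] at hH'
          have hp := AvgSur.per_H' n h t hn f hf0 hf S H' hH'.2 hth hhn
          have hfM : f (S ∪ H') ≤ M := by
            refine hM _ (le_trans (Finset.card_union_le S H') ?_)
            rw [hH'.2]
            omega
          have hc2f : (c2 : ℝ) * f (S ∪ H') ≤ (c2 : ℝ) * M :=
            mul_le_mul_of_nonneg_left hfM (Nat.cast_nonneg _)
          rw [← hc1def, ← hc2def] at hp
          linarith
      _ = (n.choose t : ℝ) * ((c2 : ℝ) * M) := by
          rw [Finset.sum_const, Finset.card_powersetCard, Finset.card_univ, hn, nsmul_eq_mul]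
  -- positivity facts
  have hCnh : (0:ℝ) < (n.choose h : ℝ) := by
    exact_mod_cast Nat.choose_pos (le_of_lt hhn)
  have hCht : (0:ℝ) < (h.choose t : ℝ) := by
    exact_mod_cast Nat.choose_pos (le_of_lt hth)
  have hnh : (0:ℝ) < (n : ℝ) - (h : ℝ) := by
    have : (h:ℝ) < (n:ℝ) := by exact_mod_cast hhn
    linarith
  -- the main nat inequality
  have hkey_nat : (n.choose t) * c2 * (n - h) ≤ h * (n.choose h * h.choose t) := by
    have hid : n.choose h * h.choose t = n.choose t * ((n-t).choose (h-t)) :=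
      Nat.choose_mul (le_of_lt hth)
    have h1 := Nat.add_one_mul_choose_eq (n-t-1) (h-t-1)
    have e1 : n-t-1+1 = n - t := by omega
    have e2 : h-t-1+1 = h - t := by omega
    rw [e1, e2] at h1
    have hc2c1 : (n - t) * c2 = (n-t).choose (h-t) * (h - t) := h1
    have hmono : (n - h) * (h - t) ≤ h * (n - t) := by
      calc (n-h)*(h-t) ≤ (n-t)*h :=
            Nat.mul_le_mul (Nat.sub_le_sub_left (le_of_lt hth) n) (Nat.sub_le h t)
        _ = h * (n-t) := Nat.mul_comm _ _
    have hstep : c2 * (n - h) * (h - t) ≤ h * ((n-t).choose (h-t)) * (h - t) := by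
      calc c2 * (n-h) * (h-t) = c2 * ((n-h) * (h-t)) := by ring
        _ ≤ c2 * (h * (n-t)) := Nat.mul_le_mul_left _ hmono
        _ = h * ((n-t) * c2) := by ring
        _ = h * ((n-t).choose (h-t) * (h-t)) := by rw [hc2c1]
        _ = h * ((n-t).choose (h-t)) * (h-t) := by ring
    have hht : 0 < h - t := by omega
    have hmain : c2 * (n - h) ≤ h * ((n-t).choose (h-t)) :=
      Nat.le_of_mul_le_mul_right hstep hht
    calc n.choose t * c2 * (n-h) = n.choose t * (c2 * (n-h)) := by ring
      _ ≤ n.choose t * (h * ((n-t).choose (h-t))) := Nat.mul_le_mul_left _ hmain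
      _ = h * (n.choose t * (n-t).choose (h-t)) := by ring
      _ = h * (n.choose h * h.choose t) := by rw [hid]
  -- final real arithmetic
  have hcoef : ((n.choose t : ℝ) * (c2 : ℝ)) / ((n.choose h : ℝ) * (h.choose t : ℝ))
      ≤ (h : ℝ) / ((n : ℝ) - (h : ℝ)) := by
    rw [div_le_div_iff₀ (by positivity) hnh]
    have := hkey_nat
    have hcast : ((n.choose t * c2 * (n - h) : ℕ) : ℝ) ≤ ((h * (n.choose h * h.choose t) : ℕ) : ℝ) := by
      exact_mod_cast this
    push_cast [Nat.cast_sub (le_of_lt hhn)] at hcast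
    linarith [hcast]
  have h2 : (1 / (n.choose h : ℝ)) * ((1 / (h.choose t : ℝ)) * Q)
      - (1 / (n.choose h : ℝ)) * ((1 / (h.choose t : ℝ)) * L)
      = (1 / ((n.choose h : ℝ) * (h.choose t : ℝ))) * (Q - L) := by
    field_simp
  have h3 : (1 / ((n.choose h : ℝ) * (h.choose t : ℝ))) * (Q - L)
      ≤ (1 / ((n.choose h : ℝ) * (h.choose t : ℝ))) * ((n.choose t : ℝ) * ((c2 : ℝ) * M)) :=
    mul_le_mul_of_nonneg_left key (by positivity)
  have h4 : (1 / ((n.choose h : ℝ) * (h.choose t : ℝ))) * ((n.choose t : ℝ) * ((c2 : ℝ) * M))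
      ≤ ((h : ℝ) / ((n : ℝ) - (h : ℝ))) * M := by
    have := mul_le_mul_of_nonneg_right hcoef hM0
    calc (1 / ((n.choose h : ℝ) * (h.choose t : ℝ))) * ((n.choose t : ℝ) * ((c2 : ℝ) * M))
        = ((n.choose t : ℝ) * (c2 : ℝ)) / ((n.choose h : ℝ) * (h.choose t : ℝ)) * M := by
          ring
      _ ≤ ((h : ℝ) / ((n : ℝ) - (h : ℝ))) * M := this
  linarith [h2, h3, h4]
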